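/- Let f_1,...,f_r : ℝ^n → ℝ be continuous. A continuous function φ : ℝ^n → ℝ lies in the set L^∞_loc(ℝ^n)·(f_1,...,f_r) = { ∑_i ψ_i f_i : ψ_i ∈ L^∞_loc } if and only if φ/(∑_i |f_i|) is locally bounded (interpreting the quotient as 0 where all f_i vanish and requiring φ to vanish on the common zero set). Equivalently, the set of such φ equals the principal ideal generated by ∑_i |f_i| over L^∞_loc. -/

import Mathlib

open Filter Topology

/-- A function `ψ` is locally bounded (in `L^∞_loc`). -/
def LocBdd {n : ℕ} (ψ : (Fin n → ℝ) → ℝ) : Prop :=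
  ∀ x : Fin n → ℝ, ∃ C : ℝ, ∀ᶠ y in 𝓝 x, |ψ y| ≤ C

/-- A continuous `φ` can be written as `∑ i ψᵢ * f i` with the `ψᵢ` locally bounded
iff `φ` vanishes on the common zero set of the `f i` and `φ / ∑ i |f i|` is locally
bounded (the quotient being interpreted as `0` where all the `f i` vanish). -/
theorem statement1 (n r : ℕ) (f : Fin r → (Fin n → ℝ) → ℝ) (φ : (Fin n → ℝ) → ℝ)
    (hf : ∀ i, Continuous (f i)) (hφ : Continuous φ) :
    (∃ ψ : Fin r → (Fin n → ℝ) → ℝ,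
        (∀ i, LocBdd (ψ i)) ∧ ∀ x, φ x = ∑ i, ψ i x * f i x) ↔
    ((∀ x, (∀ i, f i x = 0) → φ x = 0) ∧
      LocBdd (fun x => φ x / ∑ i, |f i x|)) := by
  constructor
  · rintro ⟨ψ, hψ, hsum⟩
    constructor
    · intro x hx
      simp [hsum, hx]
    · intro x
      choose C hC using fun i => hψ i x
      refine ⟨∑ i, |C i|, ?_⟩
      filter_upwards [Filter.eventually_all.2 hC] with y hy
      set S := ∑ i, |f i y| with hS
      have hS0 : 0 ≤ S := Finset.sum_nonneg fun i _ => abs_nonneg _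
      have hφy : |φ y| ≤ (∑ i, |C i|) * S := by
        rw [hsum y]
        calc |∑ i, ψ i y * f i y| ≤ ∑ i, |ψ i y * f i y| :=
              Finset.abs_sum_le_sum_abs _ _
          _ ≤ ∑ i, |C i| * S := by
            refine Finset.sum_le_sum fun i _ => ?_
            rw [abs_mul]
            refine mul_le_mul ((hy i).trans (le_abs_self _)) ?_ (abs_nonneg _)
              (abs_nonneg _)
            exact Finset.single_le_sum (fun j _ => abs_nonneg (f j y))
              (Finset.mem_univ i)
          _ = (∑ i, |C i|) * S := by rw [Finset.sum_mul]
      rcases eq_or_lt_of_le hS0 with h | h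
      · simp only [← h, div_zero, abs_zero]
        positivity
      · rw [abs_div, abs_of_pos h, div_le_iff₀ h]
        exact hφy
  · rintro ⟨hvan, hbdd⟩
    refine ⟨fun i x => (φ x / ∑ j, |f j x|) * (|f i x| / f i x), ?_, ?_⟩
    · intro i x
      obtain ⟨C, hC⟩ := hbdd x
      refine ⟨C, ?_⟩
      filter_upwards [hC] with y hy
      rw [abs_mul]
      have h1 : |(|f i y| / f i y)| ≤ 1 := by
        rcases eq_or_ne (f i y) 0 with h | h
        · simp [h]
        · rw [abs_div, abs_abs, div_self (abs_ne_zero.2 h)]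
      have := mul_le_mul hy h1 (abs_nonneg _) ((abs_nonneg _).trans hy)
      simpa using this
    · intro x
      rcases eq_or_ne (∑ j, |f j x|) 0 with h | h
      · have hall : ∀ i, f i x = 0 := fun i =>
          abs_eq_zero.1 ((Finset.sum_eq_zero_iff_of_nonneg
            (fun j _ => abs_nonneg (f j x))).1 h i (Finset.mem_univ i))
        simp [hall, hvan x hall]
      · have key : ∀ i, (φ x / ∑ j, |f j x|) * (|f i x| / f i x) * f i x
            = (φ x / ∑ j, |f j x|) * |f i x| := by
          intro i
          rcases eq_or_ne (f i x) 0 with h' | h'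
          · simp [h']
          · rw [mul_assoc, div_mul_cancel₀ _ h']
        rw [Finset.sum_congr rfl fun i _ => key i, ← Finset.mul_sum,
          div_mul_cancel₀ _ h]
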